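/- arXiv:1210.7127 — 4 statements merged into one kernel-verified Lean document; each statement's English description precedes it below -/
import Mathlib

section
/- Let N ≥ 2, let H0 be a diagonal traceless Hermitian N×N matrix and H1 a traceless Hermitian N×N matrix. If the graph of H1 is disconnected — i.e. there exists a nonempty proper subset S ⊂ {1, …, N} such that (H1)_{jk} = 0 whenever j ∈ S and k ∉ S — then Lie{−iH0, −iH1} ≠ su(N). -/
open Matrix

attribute [local instance] LieRing.ofAssociativeRing

noncomputable section

/-- The Lie subalgebra of matrices that are block-diagonal with respect to a subset `S`. -/
def blockAlg (N : ℕ) (S : Set (Fin N)) : LieSubalgebra ℝ (Matrix (Fin N) (Fin N) ℂ) where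
  carrier := {A | ∀ j ∈ S, ∀ k ∉ S, A j k = 0 ∧ A k j = 0}
  add_mem' := by
    intro A B hA hB j hj k hk
    have h1 := hA j hj k hk
    have h2 := hB j hj k hk
    constructor <;> simp [Matrix.add_apply, h1.1, h1.2, h2.1, h2.2]
  zero_mem' := by intro j hj k hk; simp
  smul_mem' := by
    intro c A hA j hj k hk
    have h := hA j hj k hk
    constructor <;> simp [Matrix.smul_apply, h.1, h.2]
  lie_mem' := by
    intro A B hA hB j hj k hk
    have mul_zero1 : ∀ (X Y : Matrix (Fin N) (Fin N) ℂ),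
        (∀ j ∈ S, ∀ k ∉ S, X j k = 0 ∧ X k j = 0) →
        (∀ j ∈ S, ∀ k ∉ S, Y j k = 0 ∧ Y k j = 0) →
        (X * Y) j k = 0 ∧ (X * Y) k j = 0 := by
      intro X Y hX hY
      constructor
      · rw [Matrix.mul_apply]
        apply Finset.sum_eq_zero
        intro l _
        by_cases hl : l ∈ S
        · rw [(hY l hl k hk).1, mul_zero]
        · rw [(hX j hj l hl).1, zero_mul]
      · rw [Matrix.mul_apply]
        apply Finset.sum_eq_zero
        intro l _
        by_cases hl : l ∈ S
        · rw [(hX l hl k hk).2, zero_mul]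
        · rw [(hY j hj l hl).2, mul_zero]
    have h1 := mul_zero1 A B hA hB
    have h2 := mul_zero1 B A hB hA
    constructor <;>
      simp [Ring.lie_def, Matrix.sub_apply, h1.1, h1.2, h2.1, h2.2]

/-- `su(N)`: the traceless skew-Hermitian `N×N` complex matrices. -/
def suSet (N : ℕ) : Set (Matrix (Fin N) (Fin N) ℂ) :=
  {A | Aᴴ = -A ∧ A.trace = 0}

/-- If the coupling graph of `H1` is disconnected — i.e. there is a nonempty proper
subset `S` of indices with `(H1)_{jk} = 0` whenever `j ∈ S` and `k ∉ S` — then `−iH0`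
and `−iH1` (with `H0` diagonal) do not generate `su(N)`. -/
theorem lieSpan_ne_su_of_disconnected {N : ℕ} (hN : 2 ≤ N)
    (H0 H1 : Matrix (Fin N) (Fin N) ℂ)
    (hH0diag : H0.IsDiag) (hH0 : H0.IsHermitian) (hH0trace : H0.trace = 0)
    (hH1 : H1.IsHermitian) (hH1trace : H1.trace = 0)
    (S : Set (Fin N)) (hSne : S.Nonempty) (hSproper : S ≠ Set.univ)
    (hcut : ∀ j ∈ S, ∀ k ∉ S, H1 j k = 0) :
    (LieSubalgebra.lieSpan ℝ (Matrix (Fin N) (Fin N) ℂ)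
        {(-Complex.I) • H0, (-Complex.I) • H1} : Set (Matrix (Fin N) (Fin N) ℂ))
      ≠ suSet N := by
  obtain ⟨j, hj⟩ := hSne
  obtain ⟨k, hk⟩ : ∃ k, k ∉ S := by
    by_contra h
    push_neg at h
    exact hSproper (Set.eq_univ_of_forall h)
  have hjk : j ≠ k := fun h => hk (h ▸ hj)
  -- the span is contained in blockAlg
  have hspan : LieSubalgebra.lieSpan ℝ (Matrix (Fin N) (Fin N) ℂ)
      {(-Complex.I) • H0, (-Complex.I) • H1} ≤ blockAlg N S := by
    rw [LieSubalgebra.lieSpan_le]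
    intro A hA
    rcases hA with rfl | rfl
    · intro a ha b hb
      have hab : a ≠ b := fun h => hb (h ▸ ha)
      constructor <;> simp [Matrix.smul_apply, hH0diag hab, hH0diag hab.symm]
    · intro a ha b hb
      have h1 : H1 a b = 0 := hcut a ha b hb
      have h2 : H1 b a = 0 := by
        have := congrFun (congrFun hH1 b) a
        simpa [Matrix.conjTranspose_apply, h1] using this.symm
      constructor <;> simp [Matrix.smul_apply, h1, h2]
  intro heq
  -- the witness matrix
  set E : Matrix (Fin N) (Fin N) ℂ :=
    Matrix.single j k 1 - Matrix.single k j 1 with hE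
  have hEsu : E ∈ suSet N := by
    constructor
    · ext a b
      simp [hE, Matrix.conjTranspose_apply, Matrix.single, Matrix.sub_apply,
        Matrix.neg_apply, Matrix.of_apply]
      by_cases h1 : a = k <;> by_cases h2 : b = j <;> simp [h1, h2, and_comm]
    · simp [hE, Matrix.trace_sub, Matrix.trace_single_eq_of_ne j k (1:ℂ) hjk, Matrix.trace_single_eq_of_ne k j (1:ℂ) hjk.symm]
  have hEmem : E ∈ (LieSubalgebra.lieSpan ℝ (Matrix (Fin N) (Fin N) ℂ)
      {(-Complex.I) • H0, (-Complex.I) • H1} : Set (Matrix (Fin N) (Fin N) ℂ)) := by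
    rw [heq]; exact hEsu
  have hEblock := hspan hEmem
  have := (hEblock j hj k hk).1
  simp [hE, Matrix.sub_apply, Matrix.single_apply_same,
    Matrix.single, hjk, hjk.symm] at this
end
end

section
/- Let L_1, …, L_m ∈ M_N(ℂ) define a unital dissipator 𝓛_D (i.e. Σ_k L_k L_k† = Σ_k L_k† L_k), let H : [0, ∞) → M_N(ℂ) be continuous with H(t) Hermitian for every t (an arbitrarily controlled Hamiltonian), and let ρ : [0, ∞) → M_N(ℂ) be differentiable with ρ(t) Hermitian for every t and ρ'(t) = −i[H(t), ρ(t)] + 𝓛_D(ρ(t)). Then the purity t ↦ tr(ρ(t)²) is non-increasing on [0, ∞). -/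
open Matrix

attribute [local instance] Matrix.frobeniusNormedAddCommGroup Matrix.frobeniusNormedSpace

noncomputable section

/-- The dissipator associated to noise operators `L 1, …, L m`:
`𝓛_D(ρ) = Σ_k (L_k ρ L_k† − ½(L_k† L_k ρ + ρ L_k† L_k))`. -/
def dissipator {N m : ℕ} (L : Fin m → Matrix (Fin N) (Fin N) ℂ)
    (ρ : Matrix (Fin N) (Fin N) ℂ) : Matrix (Fin N) (Fin N) ℂ :=
  ∑ k : Fin m,
    (L k * ρ * (L k)ᴴ - (1 / 2 : ℂ) • ((L k)ᴴ * L k * ρ + ρ * ((L k)ᴴ * L k)))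

attribute [local instance] Matrix.frobeniusNormedRing Matrix.frobeniusNormedAlgebra

/-- Cyclic invariance of the trace for four factors. -/
private lemma cyc4 {N : ℕ} (a b c d : Matrix (Fin N) (Fin N) ℂ) :
    trace (a*(b*(c*d))) = trace (b*(c*(d*a))) := by
  rw [trace_mul_comm]; simp [mul_assoc]

private lemma trace_self_conjTranspose_re_nonneg {N : ℕ} (A : Matrix (Fin N) (Fin N) ℂ) :
    0 ≤ (trace (A * Aᴴ)).re := by
  have h : trace (A * Aᴴ) = ∑ i, ∑ j, A i j * star (A i j) := by
    simp [Matrix.trace, Matrix.mul_apply, Matrix.diag, Matrix.conjTranspose_apply]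
  rw [h]
  simp only [Complex.star_def, Complex.mul_conj, Complex.re_sum, Complex.ofReal_re]
  exact Finset.sum_nonneg fun i _ => Finset.sum_nonneg fun j _ => Complex.normSq_nonneg _

private lemma perk {N : ℕ} (l ρ : Matrix (Fin N) (Fin N) ℂ) (hρ : ρᴴ = ρ) :
    2 * trace (ρ * (l * ρ * lᴴ - (1/2 : ℂ) • (lᴴ * l * ρ + ρ * (lᴴ * l)))) +
      trace ((l*ρ - ρ*l) * (l*ρ - ρ*l)ᴴ)
    = trace (ρ*(ρ*(l*lᴴ))) - trace (ρ*(ρ*(lᴴ*l))) := by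
  have hc : (l*ρ - ρ*l)ᴴ = ρ*lᴴ - lᴴ*ρ := by
    simp [Matrix.conjTranspose_sub, Matrix.conjTranspose_mul, hρ]
  rw [hc]
  have f1 : trace (ρ*(lᴴ*(l*ρ))) = trace (ρ*(ρ*(lᴴ*l))) :=
    (cyc4 ρ lᴴ l ρ).trans ((cyc4 lᴴ l ρ ρ).trans (cyc4 l ρ ρ lᴴ))
  have f2 : trace (l*(ρ*(ρ*lᴴ))) = trace (ρ*(ρ*(lᴴ*l))) := cyc4 l ρ ρ lᴴ
  have f3 : trace (l*(ρ*(lᴴ*ρ))) = trace (ρ*(l*(ρ*lᴴ))) :=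
    (cyc4 l ρ lᴴ ρ).trans ((cyc4 ρ lᴴ ρ l).trans (cyc4 lᴴ ρ l ρ))
  have f4 : trace (ρ*(l*(lᴴ*ρ))) = trace (ρ*(ρ*(l*lᴴ))) :=
    (cyc4 ρ l lᴴ ρ).trans ((cyc4 l lᴴ ρ ρ).trans (cyc4 lᴴ ρ ρ l))
  simp only [Matrix.mul_sub, Matrix.sub_mul, Matrix.mul_add, Matrix.add_mul,
    Matrix.mul_smul, Matrix.smul_mul, trace_sub, trace_add, trace_smul, mul_assoc,
    smul_eq_mul]
  linear_combination -f1 + f2 - f3 + f4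

private lemma key_ineq {N m : ℕ} (L : Fin m → Matrix (Fin N) (Fin N) ℂ)
    (hunital : ∑ k : Fin m, L k * (L k)ᴴ = ∑ k : Fin m, (L k)ᴴ * L k)
    (ρ : Matrix (Fin N) (Fin N) ℂ) (hρ : ρᴴ = ρ) :
    (trace (ρ * dissipator L ρ)).re ≤ 0 := by
  have hsum : 2 * trace (ρ * dissipator L ρ)
      + ∑ k : Fin m, trace ((L k * ρ - ρ * L k) * (L k * ρ - ρ * L k)ᴴ)
      = trace (ρ*(ρ*(∑ k : Fin m, L k * (L k)ᴴ)))
        - trace (ρ*(ρ*(∑ k : Fin m, (L k)ᴴ * L k))) := by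
    unfold dissipator
    simp only [Matrix.mul_sum, trace_sum, Finset.mul_sum]
    rw [← Finset.sum_add_distrib, ← Finset.sum_sub_distrib]
    exact Finset.sum_congr rfl fun k _ => perk (L k) ρ hρ
  rw [hunital, sub_self] at hsum
  have h2 : trace (ρ * dissipator L ρ)
      = -(1/2 : ℂ) * ∑ k : Fin m, trace ((L k * ρ - ρ * L k) * (L k * ρ - ρ * L k)ᴴ) := by
    linear_combination hsum / 2
  rw [h2]
  have hnn : 0 ≤ (∑ k : Fin m, trace ((L k * ρ - ρ * L k) * (L k * ρ - ρ * L k)ᴴ)).re := by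
    rw [Complex.re_sum]
    exact Finset.sum_nonneg fun k _ => trace_self_conjTranspose_re_nonneg _
  have hre : (-(1/2 : ℂ)).re = -(1/2 : ℝ) := by norm_num
  have him : (-(1/2 : ℂ)).im = 0 := by norm_num
  rw [Complex.mul_re, hre, him]
  nlinarith [hnn]

/-- Along any solution of the controlled master equation
`ρ' = −i[H(t), ρ] + 𝓛_D(ρ)` with a unital dissipator `𝓛_D` and arbitrary (continuous,
Hermitian-valued) control Hamiltonian `H(t)`, the purity `tr(ρ(t)²)` is non-increasing
on `[0, ∞)`. -/
theorem purity_antitoneOn {N m : ℕ}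
    (L : Fin m → Matrix (Fin N) (Fin N) ℂ)
    (hunital : ∑ k : Fin m, L k * (L k)ᴴ = ∑ k : Fin m, (L k)ᴴ * L k)
    (H : ℝ → Matrix (Fin N) (Fin N) ℂ)
    (hHcont : ContinuousOn H (Set.Ici (0 : ℝ)))
    (hHherm : ∀ t ∈ Set.Ici (0 : ℝ), (H t).IsHermitian)
    (ρ : ℝ → Matrix (Fin N) (Fin N) ℂ)
    (hρherm : ∀ t ∈ Set.Ici (0 : ℝ), (ρ t).IsHermitian)
    (hderiv : ∀ t ∈ Set.Ici (0 : ℝ),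
      HasDerivWithinAt ρ
        (-Complex.I • (H t * ρ t - ρ t * H t) + dissipator L (ρ t))
        (Set.Ici (0 : ℝ)) t) :
    AntitoneOn (fun t => (Matrix.trace (ρ t * ρ t)).re) (Set.Ici (0 : ℝ)) := by
  set M : ℝ → Matrix (Fin N) (Fin N) ℂ :=
    fun t => -Complex.I • (H t * ρ t - ρ t * H t) + dissipator L (ρ t) with hM
  have hF : ∀ t ∈ Set.Ici (0 : ℝ),
      HasDerivWithinAt (fun u => (Matrix.trace (ρ u * ρ u)).re)
        ((Matrix.trace (M t * ρ t + ρ t * M t)).re) (Set.Ici (0 : ℝ)) t := by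
    intro t ht
    have hmul : HasDerivWithinAt (fun u => ρ u * ρ u) (M t * ρ t + ρ t * M t)
        (Set.Ici (0 : ℝ)) t := (hderiv t ht).mul (hderiv t ht)
    have h2 : HasDerivWithinAt (fun u => Matrix.trace (ρ u * ρ u))
        (Matrix.trace (M t * ρ t + ρ t * M t)) (Set.Ici (0 : ℝ)) t := by
      have := (((Matrix.traceLinearMap (Fin N) ℂ ℂ).restrictScalars
        ℝ).toContinuousLinearMap.hasFDerivAt (x := ρ t * ρ t)).comp_hasDerivWithinAt t hmul
      exact this
    have := (Complex.reCLM.hasFDerivAt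
      (x := Matrix.trace (ρ t * ρ t))).comp_hasDerivWithinAt t h2
    simpa [Function.comp_def] using this
  have hnonpos : ∀ t ∈ Set.Ici (0 : ℝ),
      (Matrix.trace (M t * ρ t + ρ t * M t)).re ≤ 0 := by
    intro t ht
    have hcomm : Matrix.trace (ρ t * (H t * ρ t - ρ t * H t)) = 0 := by
      rw [Matrix.mul_sub, trace_sub, ← mul_assoc, trace_mul_comm (ρ t * H t) (ρ t),
        ← mul_assoc, sub_self]
    have htr : Matrix.trace (M t * ρ t + ρ t * M t)
        = 2 * Matrix.trace (ρ t * dissipator L (ρ t)) := by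
      rw [trace_add, trace_mul_comm]
      rw [hM]
      simp only [Matrix.mul_add, trace_add, Matrix.mul_smul, trace_smul, hcomm, smul_zero]
      ring
    rw [htr]
    have := key_ineq L hunital (ρ t) (hρherm t ht)
    rw [Complex.mul_re]
    norm_num
    linarith [this]
  apply antitoneOn_of_deriv_nonpos (convex_Ici 0)
  · exact fun t ht => (hF t ht).continuousWithinAt
  · intro x hx
    rw [interior_Ici] at hx
    exact (((hF x (Set.mem_Ici.mpr (le_of_lt hx))).hasDerivAt (Ici_mem_nhds hx)).differentiableAt).differentiableWithinAt
  · intro x hx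
    rw [interior_Ici] at hx
    rw [((hF x (Set.mem_Ici.mpr (le_of_lt hx))).hasDerivAt (Ici_mem_nhds hx)).deriv]
    exact hnonpos x (Set.mem_Ici.mpr (le_of_lt hx))
end
end

section
/- Let L_1, …, L_m ∈ M_N(ℂ) define a unital dissipator 𝓛_D (i.e. Σ_k L_k L_k† = Σ_k L_k† L_k). Let ρ_0, ρ_1 be density matrices with tr(ρ_1²) > tr(ρ_0²). Then ρ_1 is not reachable from ρ_0 by the controlled master equation: for every T ≥ 0, every continuous H : [0, T] → M_N(ℂ) with H(t) Hermitian for all t, and every differentiable Hermitian-valued solution ρ of ρ'(t) = −i[H(t), ρ(t)] + 𝓛_D(ρ(t)) with ρ(0) = ρ_0, one has ρ(t) ≠ ρ_1 for all t ∈ [0, T]. In particular, the controlled master equation with unital dissipator is never controllable on the set of density matrices. -/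
open Matrix
open scoped ComplexOrder

attribute [local instance] Matrix.frobeniusNormedAddCommGroup Matrix.frobeniusNormedSpace

noncomputable section

/-- A density matrix: positive semidefinite (hence Hermitian) with unit trace. -/
def IsDensityMatrix {N : ℕ} (ρ : Matrix (Fin N) (Fin N) ℂ) : Prop :=
  ρ.PosSemidef ∧ ρ.trace = 1

section Aux

attribute [local instance] Matrix.frobeniusNormedRing Matrix.frobeniusNormedAlgebra

namespace PurityAux

variable {N m : ℕ}

lemma tr4 (a b c d : Matrix (Fin N) (Fin N) ℂ) : trace (a*b*c*d) = trace (d*a*b*c) := by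
  rw [Matrix.trace_mul_comm]; simp [mul_assoc]

lemma re_trace_nonneg (A : Matrix (Fin N) (Fin N) ℂ) : 0 ≤ (trace (Aᴴ * A)).re := by
  have h : (trace (Aᴴ*A)) = ∑ j, ∑ i, (starRingEnd ℂ) (A i j) * A i j := by
    simp [Matrix.trace, Matrix.diag, Matrix.mul_apply, Matrix.conjTranspose_apply]
  rw [h]
  simp only [Complex.re_sum]
  refine Finset.sum_nonneg fun j _ => Finset.sum_nonneg fun i _ => ?_
  rw [Complex.conj_mul']
  norm_cast
  positivity

lemma per_k (A ρ : Matrix (Fin N) (Fin N) ℂ) (hρ : ρᴴ = ρ) :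
    trace ((A*ρ*Aᴴ - (1/2:ℂ) • (Aᴴ*A*ρ + ρ*(Aᴴ*A))) * ρ)
      + trace (ρ * (A*ρ*Aᴴ - (1/2:ℂ) • (Aᴴ*A*ρ + ρ*(Aᴴ*A))))
      + trace ((A*ρ - ρ*A)ᴴ * (A*ρ - ρ*A))
    = trace (A*Aᴴ*(ρ*ρ)) - trace (Aᴴ*A*(ρ*ρ)) := by
  simp only [conjTranspose_sub, conjTranspose_mul, hρ, sub_mul, mul_sub, add_mul, mul_add,
    smul_mul_assoc, Matrix.mul_smul, trace_sub, trace_add, trace_smul, smul_eq_mul,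
    ← mul_assoc]
  rw [show trace (Aᴴ*ρ*A*ρ) = trace (A*ρ*Aᴴ*ρ) from by rw [tr4, tr4]]
  rw [show trace (ρ*ρ*Aᴴ*A) = trace (Aᴴ*A*ρ*ρ) from by rw [tr4, tr4]]
  rw [show trace (Aᴴ*ρ*ρ*A) = trace (A*Aᴴ*ρ*ρ) from by rw [tr4]]
  rw [show trace (ρ*Aᴴ*A*ρ) = trace (Aᴴ*A*ρ*ρ) from by rw [tr4, tr4, tr4]]
  rw [show trace (ρ*A*ρ*Aᴴ) = trace (A*ρ*Aᴴ*ρ) from by rw [tr4, tr4, tr4]]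
  rw [show trace (ρ*Aᴴ*ρ*A) = trace (A*ρ*Aᴴ*ρ) from by rw [tr4]]
  ring

lemma dissipator_key (L : Fin m → Matrix (Fin N) (Fin N) ℂ)
    (hunital : ∑ k : Fin m, L k * (L k)ᴴ = ∑ k : Fin m, (L k)ᴴ * L k)
    (ρ : Matrix (Fin N) (Fin N) ℂ) (hρ : ρᴴ = ρ) :
    trace (dissipator L ρ * ρ + ρ * dissipator L ρ)
      = - ∑ k : Fin m, trace ((L k * ρ - ρ * L k)ᴴ * (L k * ρ - ρ * L k)) := by
  have key : trace (dissipator L ρ * ρ) + trace (ρ * dissipator L ρ)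
      + ∑ k : Fin m, trace ((L k * ρ - ρ * L k)ᴴ * (L k * ρ - ρ * L k))
      = trace ((∑ k : Fin m, L k * (L k)ᴴ) * (ρ*ρ))
        - trace ((∑ k : Fin m, (L k)ᴴ * L k) * (ρ*ρ)) := by
    rw [dissipator, Finset.sum_mul, Finset.mul_sum, trace_sum, trace_sum,
      Finset.sum_mul, Finset.sum_mul, trace_sum, trace_sum,
      ← Finset.sum_add_distrib, ← Finset.sum_add_distrib, ← Finset.sum_sub_distrib]
    exact Finset.sum_congr rfl fun k _ => per_k (L k) ρ hρ
  rw [hunital, sub_self] at key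
  rw [trace_add]
  linear_combination key

end PurityAux

namespace PurityAux

lemma ham_cancel {N : ℕ} (Hm ρ : Matrix (Fin N) (Fin N) ℂ) :
    trace ((-Complex.I • (Hm*ρ - ρ*Hm)) * ρ + ρ * (-Complex.I • (Hm*ρ - ρ*Hm))) = 0 := by
  simp only [smul_mul_assoc, Matrix.mul_smul, trace_add, trace_smul, sub_mul, mul_sub,
    trace_sub, ← mul_assoc, smul_eq_mul]
  rw [show trace (ρ*ρ*Hm) = trace (Hm*ρ*ρ) from Matrix.trace_mul_cycle ρ ρ Hm]
  ring

lemma deriv_re_nonpos {N m : ℕ} (L : Fin m → Matrix (Fin N) (Fin N) ℂ)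
    (hunital : ∑ k : Fin m, L k * (L k)ᴴ = ∑ k : Fin m, (L k)ᴴ * L k)
    (Hm ρ : Matrix (Fin N) (Fin N) ℂ) (hρ : ρᴴ = ρ) :
    (trace ((-Complex.I • (Hm*ρ - ρ*Hm) + dissipator L ρ) * ρ
      + ρ * (-Complex.I • (Hm*ρ - ρ*Hm) + dissipator L ρ))).re ≤ 0 := by
  have h1 : trace ((-Complex.I • (Hm*ρ - ρ*Hm) + dissipator L ρ) * ρ
      + ρ * (-Complex.I • (Hm*ρ - ρ*Hm) + dissipator L ρ))
      = trace (dissipator L ρ * ρ + ρ * dissipator L ρ) := by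
    have h2 := ham_cancel Hm ρ
    rw [trace_add] at h2 ⊢
    simp only [add_mul, mul_add, trace_add]
    linear_combination h2
  rw [h1, dissipator_key L hunital ρ hρ]
  simp only [Complex.neg_re, neg_nonpos, Complex.re_sum]
  exact Finset.sum_nonneg fun k _ => re_trace_nonneg _

end PurityAux

theorem not_reachable_of_purity_increase' {N m : ℕ}
    (L : Fin m → Matrix (Fin N) (Fin N) ℂ)
    (hunital : ∑ k : Fin m, L k * (L k)ᴴ = ∑ k : Fin m, (L k)ᴴ * L k)
    (ρ0 ρ1 : Matrix (Fin N) (Fin N) ℂ)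
    (hρ0 : IsDensityMatrix ρ0) (hρ1 : IsDensityMatrix ρ1)
    (hpurity : (Matrix.trace (ρ0 * ρ0)).re < (Matrix.trace (ρ1 * ρ1)).re) :
    ∀ (T : ℝ), 0 ≤ T →
      ∀ H : ℝ → Matrix (Fin N) (Fin N) ℂ,
        ContinuousOn H (Set.Icc (0 : ℝ) T) →
        (∀ t ∈ Set.Icc (0 : ℝ) T, (H t).IsHermitian) →
        ∀ ρ : ℝ → Matrix (Fin N) (Fin N) ℂ,
          (∀ t ∈ Set.Icc (0 : ℝ) T, (ρ t).IsHermitian) →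
          (∀ t ∈ Set.Icc (0 : ℝ) T,
            HasDerivWithinAt ρ
              (-Complex.I • (H t * ρ t - ρ t * H t) + dissipator L (ρ t))
              (Set.Icc (0 : ℝ) T) t) →
          ρ 0 = ρ0 →
          ∀ t ∈ Set.Icc (0 : ℝ) T, ρ t ≠ ρ1 := by
  intro T hT H hHcont hHherm ρ hherm hde h0 t ht hne
  set s := Set.Icc (0 : ℝ) T with hs
  set ρ' : ℝ → Matrix (Fin N) (Fin N) ℂ :=
    fun u => -Complex.I • (H u * ρ u - ρ u * H u) + dissipator L (ρ u) with hρ'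
  let e : Matrix (Fin N) (Fin N) ℂ →L[ℝ] ℝ :=
    LinearMap.toContinuousLinearMap
      (Complex.reLm.comp ((Matrix.traceLinearMap (Fin N) ℂ ℂ).restrictScalars ℝ))
  have hf : ∀ u ∈ s, HasDerivWithinAt (fun v => (trace (ρ v * ρ v)).re)
      ((trace (ρ' u * ρ u + ρ u * ρ' u)).re) s u := by
    intro u hu
    have h1 : HasDerivWithinAt (fun v => ρ v * ρ v) (ρ' u * ρ u + ρ u * ρ' u) s u :=
      (hde u hu).mul (hde u hu)
    exact e.hasFDerivAt.comp_hasDerivWithinAt u h1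
  have hnonpos : ∀ u ∈ s, (trace (ρ' u * ρ u + ρ u * ρ' u)).re ≤ 0 := fun u hu =>
    PurityAux.deriv_re_nonpos L hunital (H u) (ρ u) (hherm u hu)
  have hcont : ContinuousOn (fun v => (trace (ρ v * ρ v)).re) s := fun u hu =>
    (hf u hu).continuousWithinAt
  have hda : ∀ x ∈ interior s, HasDerivAt (fun v => (trace (ρ v * ρ v)).re)
      ((trace (ρ' x * ρ x + ρ x * ρ' x)).re) x := by
    intro x hx
    rw [hs, interior_Icc] at hx
    exact (hf x (Set.Ioo_subset_Icc_self hx)).hasDerivAt (Icc_mem_nhds hx.1 hx.2)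
  have hanti := antitoneOn_of_deriv_nonpos (convex_Icc (0:ℝ) T) hcont
    (fun x hx => ((hda x hx).differentiableAt).differentiableWithinAt)
    (fun x hx => by rw [(hda x hx).deriv]; exact hnonpos x (interior_subset hx))
  have h0s : (0:ℝ) ∈ s := Set.mem_Icc.mpr ⟨le_refl 0, hT⟩
  have hle := hanti h0s ht ht.1
  simp only [h0, hne] at hle
  linarith

end Aux

/-- With a unital dissipator, a density matrix `ρ1` of strictly larger purity than `ρ0`
is not reachable from `ρ0` by the controlled master equation, for any time horizon and
any continuous Hermitian-valued control Hamiltonian.  In particular the controlled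
master equation with a unital dissipator is never controllable on density matrices. -/
theorem not_reachable_of_purity_increase {N m : ℕ}
    (L : Fin m → Matrix (Fin N) (Fin N) ℂ)
    (hunital : ∑ k : Fin m, L k * (L k)ᴴ = ∑ k : Fin m, (L k)ᴴ * L k)
    (ρ0 ρ1 : Matrix (Fin N) (Fin N) ℂ)
    (hρ0 : IsDensityMatrix ρ0) (hρ1 : IsDensityMatrix ρ1)
    (hpurity : (Matrix.trace (ρ0 * ρ0)).re < (Matrix.trace (ρ1 * ρ1)).re) :
    ∀ (T : ℝ), 0 ≤ T →
      ∀ H : ℝ → Matrix (Fin N) (Fin N) ℂ,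
        ContinuousOn H (Set.Icc (0 : ℝ) T) →
        (∀ t ∈ Set.Icc (0 : ℝ) T, (H t).IsHermitian) →
        ∀ ρ : ℝ → Matrix (Fin N) (Fin N) ℂ,
          (∀ t ∈ Set.Icc (0 : ℝ) T, (ρ t).IsHermitian) →
          (∀ t ∈ Set.Icc (0 : ℝ) T,
            HasDerivWithinAt ρ
              (-Complex.I • (H t * ρ t - ρ t * H t) + dissipator L (ρ t))
              (Set.Icc (0 : ℝ) T) t) →
          ρ 0 = ρ0 →
          ∀ t ∈ Set.Icc (0 : ℝ) T, ρ t ≠ ρ1 := by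
  exact not_reachable_of_purity_increase' L hunital ρ0 ρ1 hρ0 hρ1 hpurity
end
end

section
/- Let H0, H1, ρ_d ∈ M_N(ℂ) be Hermitian with [H0, ρ_d] = 0. Let u : ℝ → ℝ be continuous and let ρ : ℝ → M_N(ℂ) be differentiable with ρ(t) Hermitian for every t and ρ'(t) = −i[H0 + u(t)H1, ρ(t)]. Define the Lyapunov function V(t) = ½ tr((ρ_d − ρ(t))²). Then for every t, V'(t) = u(t) · Re tr([−iH1, ρ_d] · ρ(t)); in particular, under the feedback choice u(t) = −Re tr([−iH1, ρ_d] · ρ(t)) one has V'(t) = −(Re tr([−iH1, ρ_d] · ρ(t)))² ≤ 0. -/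
open Matrix

attribute [local instance] Matrix.frobeniusNormedAddCommGroup Matrix.frobeniusNormedSpace
attribute [local instance] Matrix.frobeniusNormedRing Matrix.frobeniusNormedAlgebra

noncomputable section

/-- The real part of the trace, as an `ℝ`-linear map. -/
def traceReLm (N : ℕ) : Matrix (Fin N) (Fin N) ℂ →ₗ[ℝ] ℝ :=
  Complex.reLm.comp ((Matrix.traceLinearMap (Fin N) ℂ ℂ).restrictScalars ℝ)

/-- Lyapunov-based open-loop design for the controlled Liouville–von Neumann equation
`ρ' = −i[H0 + u(t)H1, ρ]`: with `V(t) = ½ tr((ρ_d − ρ(t))²)` and `[H0, ρ_d] = 0`, one has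
`V'(t) = u(t) · Re tr([−iH1, ρ_d] ρ(t))`; in particular the feedback choice
`u(t) = −Re tr([−iH1, ρ_d] ρ(t))` gives `V'(t) = −(Re tr([−iH1, ρ_d] ρ(t)))² ≤ 0`. -/
theorem lyapunov_derivative {N : ℕ}
    (H0 H1 ρd : Matrix (Fin N) (Fin N) ℂ)
    (hH0 : H0.IsHermitian) (hH1 : H1.IsHermitian) (hρd : ρd.IsHermitian)
    (hcomm : H0 * ρd = ρd * H0)
    (u : ℝ → ℝ) (hu : Continuous u)
    (ρ : ℝ → Matrix (Fin N) (Fin N) ℂ)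
    (hρherm : ∀ t : ℝ, (ρ t).IsHermitian)
    (hderiv : ∀ t : ℝ, HasDerivAt ρ
      (-Complex.I • ((H0 + (u t : ℂ) • H1) * ρ t - ρ t * (H0 + (u t : ℂ) • H1))) t) :
    ∀ t : ℝ,
      HasDerivAt (fun s : ℝ => (1 / 2) * (Matrix.trace ((ρd - ρ s) * (ρd - ρ s))).re)
        (u t * (Matrix.trace ((-Complex.I • (H1 * ρd - ρd * H1)) * ρ t)).re) t ∧
      (u t = -(Matrix.trace ((-Complex.I • (H1 * ρd - ρd * H1)) * ρ t)).re →
        HasDerivAt (fun s : ℝ => (1 / 2) * (Matrix.trace ((ρd - ρ s) * (ρd - ρ s))).re)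
          (-((Matrix.trace ((-Complex.I • (H1 * ρd - ρd * H1)) * ρ t)).re) ^ 2) t ∧
        -((Matrix.trace ((-Complex.I • (H1 * ρd - ρd * H1)) * ρ t)).re) ^ 2 ≤ 0) := by
  intro t
  set B := H0 + (u t : ℂ) • H1 with hB
  set A := -Complex.I • (B * ρ t - ρ t * B) with hA
  set r := ρ t with hr
  -- derivative of s ↦ ρd - ρ s
  have hg : HasDerivAt (fun s => ρd - ρ s) (-A) t := (hderiv t).const_sub ρd
  have hmul : HasDerivAt (fun s => (ρd - ρ s) * (ρd - ρ s))
      ((-A) * (ρd - r) + (ρd - r) * (-A)) t := hg.mul hg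
  let L : Matrix (Fin N) (Fin N) ℂ →L[ℝ] ℝ := (traceReLm N).toContinuousLinearMap
  have hL : HasDerivAt (fun s => (Matrix.trace ((ρd - ρ s) * (ρd - ρ s))).re)
      (Matrix.trace ((-A) * (ρd - r) + (ρd - r) * (-A))).re t :=
    L.hasFDerivAt.comp_hasDerivAt t hmul
  have hV := hL.const_mul (1/2 : ℝ)
  -- the key complex identity
  have key : Matrix.trace ((-A) * (ρd - r) + (ρd - r) * (-A))
      = 2 * ((u t : ℂ) * Matrix.trace ((-Complex.I • (H1 * ρd - ρd * H1)) * r)) := by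
    have h1 : Matrix.trace ((-A) * (ρd - r)) = Matrix.trace ((ρd - r) * (-A)) :=
      trace_mul_comm _ _
    have h2 : Matrix.trace ((ρd - r) * (-A))
        = (u t : ℂ) * Matrix.trace ((-Complex.I • (H1 * ρd - ρd * H1)) * r) := by
      have hA' : -A = Complex.I • (B * r - r * B) := by rw [hA]; simp only [neg_smul, neg_neg]
      rw [hA', hB]
      -- cyclic identities
      have c1 : Matrix.trace (r * (H0 * r)) = Matrix.trace (r * (r * H0)) := by
        rw [← Matrix.mul_assoc, trace_mul_comm]
      have c2 : Matrix.trace (r * (H1 * r)) = Matrix.trace (r * (r * H1)) := by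
        rw [← Matrix.mul_assoc, trace_mul_comm]
      have c3 : Matrix.trace (ρd * (r * H0)) = Matrix.trace (ρd * (H0 * r)) := by
        rw [← Matrix.mul_assoc, trace_mul_comm, ← Matrix.mul_assoc, hcomm, Matrix.mul_assoc]
      have c4 : Matrix.trace (ρd * (r * H1)) = Matrix.trace (H1 * (ρd * r)) := by
        rw [← Matrix.mul_assoc, trace_mul_comm]
      simp only [Matrix.mul_sub, Matrix.sub_mul, Matrix.add_mul, Matrix.mul_add,
        Matrix.smul_mul, Matrix.mul_smul, Matrix.mul_assoc, trace_sub, trace_add, trace_smul,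
        smul_eq_mul, neg_smul, trace_neg, neg_sub, Matrix.neg_mul]
      linear_combination (-Complex.I) * c1 + (-Complex.I) * (u t : ℂ) * c2 +
        (-Complex.I) * c3 + (-Complex.I) * (u t : ℂ) * c4
    rw [trace_add, h1, h2]; ring
  rw [key] at hV
  have hre : (1/2 : ℝ) * (2 * ((u t : ℂ) * Matrix.trace ((-Complex.I • (H1 * ρd - ρd * H1)) * r))).re
      = u t * (Matrix.trace ((-Complex.I • (H1 * ρd - ρd * H1)) * r)).re := by
    simp [Complex.mul_re]
  rw [hre] at hV
  refine ⟨hV, fun hfeed => ?_⟩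
  constructor
  · have : u t * (Matrix.trace ((-Complex.I • (H1 * ρd - ρd * H1)) * r)).re
        = -((Matrix.trace ((-Complex.I • (H1 * ρd - ρd * H1)) * r)).re) ^ 2 := by
      rw [hfeed]; ring
    rwa [this] at hV
  · nlinarith [sq_nonneg ((Matrix.trace ((-Complex.I • (H1 * ρd - ρd * H1)) * r)).re)]
end
end
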